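/- Let S_λ be the (M+1)×(M+1) matrix S_λ = [[1, bᵀ],[0, D]] + λ [−α; c] (1, aᵀ), where α ∈ ℝ, a,b,c ∈ ℝ^M, D ∈ ℝ^{M×M}. Then its characteristic polynomial satisfies det(x − S_λ) = (x−1) det(x−D) − λ det [[aᵀc − α, aᵀ(1−D) − bᵀ],[c, x − D]]. In particular det(x − S_λ) = x^{M+1} − Σ_{m=0}^M p_m x^m − λ Σ_{m=0}^M q_m x^m for some coefficients with Σ p_m = 1. -/

import Mathlib

open Matrix Polynomial

private lemma evalCharpoly {n : Type*} [Fintype n] [DecidableEq n] (S : Matrix n n ℝ) (x : ℝ) :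
    (S.charpoly).eval x = (x • (1 : Matrix n n ℝ) - S).det := by
  have h : (Polynomial.evalRingHom x) (Matrix.charmatrix S).det
      = ((Matrix.charmatrix S).map (Polynomial.evalRingHom x)).det := RingHom.map_det _ _
  have h2 : (Matrix.charmatrix S).map (Polynomial.evalRingHom x)
      = x • (1 : Matrix n n ℝ) - S := by
    ext i j
    by_cases hij : i = j
    · subst hij
      simp [Matrix.charmatrix_apply_eq, Matrix.one_apply_eq]
    · simp [Matrix.charmatrix_apply_ne _ _ _ hij, Matrix.one_apply_ne hij]
  rw [Matrix.charpoly, ← Polynomial.coe_evalRingHom, h, h2]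

private lemma detRankOne {m : Type*} [Fintype m] [DecidableEq m]
    (X : Matrix m m ℝ) (hX : IsUnit X.det) (u v : m → ℝ) (lam : ℝ) :
    (X - lam • Matrix.vecMulVec u v).det = X.det * (1 - lam * (v ⬝ᵥ (X⁻¹ *ᵥ u))) := by
  have h1 : X - lam • Matrix.vecMulVec u v
      = X + Matrix.replicateCol Unit (-(lam • u)) * Matrix.replicateRow Unit v := by
    ext i j
    simp [Matrix.mul_apply, Matrix.vecMulVec_apply, Matrix.replicateCol_apply, Matrix.replicateRow_apply]
    ring
  rw [h1, Matrix.det_add_replicateCol_mul_replicateRow hX]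
  congr 1
  have h2 : Matrix.replicateRow Unit v * X⁻¹ = Matrix.replicateRow Unit (v ᵥ* X⁻¹) := (Matrix.replicateRow_vecMul _ _).symm
  rw [h2, Matrix.det_unique]
  simp only [Matrix.add_apply, Matrix.one_apply_eq, Matrix.replicateRow_mul_replicateCol_apply]
  have : (v ᵥ* X⁻¹) ⬝ᵥ -(lam • u) = -(lam * (v ⬝ᵥ (X⁻¹ *ᵥ u))) := by
    rw [dotProduct_neg, dotProduct_smul, Matrix.dotProduct_mulVec]
    simp [mul_comm]
  rw [this]
  ring

private lemma keyLemma (M : ℕ) (α : ℝ) (a b c : Fin M → ℝ) (D : Matrix (Fin M) (Fin M) ℝ)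
    (lam : ℝ) :
    (fun x : ℝ => Matrix.det (x • (1 : Matrix (Unit ⊕ Fin M) (Unit ⊕ Fin M) ℝ)
          - (Matrix.fromBlocks (Matrix.of fun _ _ => (1 : ℝ)) (Matrix.of fun _ j => b j)
              (0 : Matrix (Fin M) Unit ℝ) D
            + lam • Matrix.vecMulVec (Sum.elim (fun _ => -α) c) (Sum.elim (fun _ => (1 : ℝ)) a))))
      = fun x : ℝ => ((x - 1) * Matrix.det (x • (1 : Matrix (Fin M) (Fin M) ℝ) - D)
          - lam * Matrix.det (Matrix.fromBlocks
              (Matrix.of fun (_ : Unit) (_ : Unit) => dotProduct a c - α)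
              (Matrix.of fun _ j => Matrix.vecMul a ((1 : Matrix (Fin M) (Fin M) ℝ) - D) j - b j)
              (Matrix.of fun (i : Fin M) (_ : Unit) => c i)
              (x • (1 : Matrix (Fin M) (Fin M) ℝ) - D))) := by
  have hP₀ne : ((X - 1) * D.charpoly : ℝ[X]) ≠ 0 :=
    ((monic_X_sub_C (1 : ℝ)).mul (Matrix.charpoly_monic D)).ne_zero
  have hdense : Dense {x : ℝ | Polynomial.IsRoot ((X - 1) * D.charpoly) x}ᶜ :=
    (Polynomial.finite_setOf_isRoot hP₀ne).countable.dense_compl ℝ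
  apply Continuous.ext_on hdense
  · exact (continuous_matrix fun i j => by
      simp only [Matrix.sub_apply, Matrix.smul_apply, smul_eq_mul]
      fun_prop).matrix_det
  · apply Continuous.sub
    · exact (continuous_id.sub continuous_const).mul
        ((continuous_matrix fun i j => by
          simp only [Matrix.sub_apply, Matrix.smul_apply, smul_eq_mul]
          fun_prop).matrix_det)
    · exact continuous_const.mul ((continuous_matrix fun i j => by
        cases i <;> cases j <;>
          simp only [Matrix.fromBlocks_apply₁₁, Matrix.fromBlocks_apply₁₂,
            Matrix.fromBlocks_apply₂₁, Matrix.fromBlocks_apply₂₂, Matrix.of_apply,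
            Matrix.sub_apply, Matrix.smul_apply, smul_eq_mul] <;> fun_prop).matrix_det)
  intro x hx
  dsimp only
  have hx' : Polynomial.eval x ((X - 1) * D.charpoly) ≠ 0 := hx
  have hx2 : (x - 1) * (x • (1 : Matrix (Fin M) (Fin M) ℝ) - D).det ≠ 0 := by
    simpa [Polynomial.eval_mul, evalCharpoly] using hx'
  have hx1 : x - 1 ≠ 0 := left_ne_zero_of_mul hx2
  set E : Matrix (Fin M) (Fin M) ℝ := x • (1 : Matrix (Fin M) (Fin M) ℝ) - D with hEdef
  have hE : E.det ≠ 0 := right_ne_zero_of_mul hx2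
  have hEu : IsUnit E.det := isUnit_iff_ne_zero.2 hE
  set w₁ : Fin M → ℝ := E⁻¹ *ᵥ c with hw₁
  have hEw : E *ᵥ w₁ = c := by
    rw [hw₁, Matrix.mulVec_mulVec, Matrix.mul_nonsing_inv _ hEu, Matrix.one_mulVec]
  -- the matrix X
  have hX : x • (1 : Matrix (Unit ⊕ Fin M) (Unit ⊕ Fin M) ℝ)
        - Matrix.fromBlocks (Matrix.of fun _ _ => (1 : ℝ)) (Matrix.of fun _ j => b j)
          (0 : Matrix (Fin M) Unit ℝ) D
      = Matrix.fromBlocks (Matrix.of fun _ _ => x - 1) (Matrix.of fun _ j => -b j) 0 E := by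
    ext i j
    rcases i with i | i <;> rcases j with j | j <;>
      simp [Matrix.one_apply, Sum.inl.injEq, Sum.inr.injEq, hEdef, Matrix.one_apply]
  have hdetX : (Matrix.fromBlocks (Matrix.of fun _ _ => x - 1) (Matrix.of fun _ j => -b j)
      (0 : Matrix (Fin M) Unit ℝ) E).det = (x - 1) * E.det := by
    rw [Matrix.det_fromBlocks_zero₂₁, Matrix.det_unique]
    simp
  set Y : Matrix (Unit ⊕ Fin M) (Unit ⊕ Fin M) ℝ :=
    Matrix.fromBlocks (Matrix.of fun _ _ => x - 1) (Matrix.of fun _ j => -b j) 0 E with hY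
  have hYu : IsUnit Y.det := by
    rw [hdetX]; exact isUnit_iff_ne_zero.2 (mul_ne_zero hx1 hE)
  -- solve Y *ᵥ w = u
  set w : Unit ⊕ Fin M → ℝ :=
    Sum.elim (fun _ => (x - 1)⁻¹ * (-α + b ⬝ᵥ w₁)) w₁ with hw
  have hYw : Y *ᵥ w = Sum.elim (fun _ => -α) c := by
    funext i
    rcases i with i | i
    · simp [hY, hw, Matrix.mulVec, dotProduct, Fintype.sum_sum_type]
      field_simp
      ring
    · have h := congrFun hEw i
      simp only [Matrix.mulVec, dotProduct] at h
      simp [hY, hw, Matrix.mulVec, dotProduct, Fintype.sum_sum_type, h]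
  have hwinv : Y⁻¹ *ᵥ Sum.elim (fun _ => -α) c = w := by
    rw [← hYw, Matrix.mulVec_mulVec, Matrix.nonsing_inv_mul _ hYu, Matrix.one_mulVec]
  -- LHS
  have hLHS : Matrix.det (x • (1 : Matrix (Unit ⊕ Fin M) (Unit ⊕ Fin M) ℝ)
          - (Matrix.fromBlocks (Matrix.of fun _ _ => (1 : ℝ)) (Matrix.of fun _ j => b j)
              (0 : Matrix (Fin M) Unit ℝ) D
            + lam • Matrix.vecMulVec (Sum.elim (fun _ => -α) c) (Sum.elim (fun _ => (1 : ℝ)) a)))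
      = (x - 1) * E.det
        * (1 - lam * ((x - 1)⁻¹ * (-α + b ⬝ᵥ w₁) + a ⬝ᵥ w₁)) := by
    rw [sub_add_eq_sub_sub, hX, detRankOne Y hYu _ _ lam, hdetX, hwinv]
    congr 2
    rw [hw, sumElim_dotProduct_sumElim]
    simp [dotProduct]
  rw [hLHS]
  -- RHS second determinant
  haveI : Invertible E := E.invertibleOfIsUnitDet hEu
  have hkey : (a ᵥ* ((1 : Matrix (Fin M) (Fin M) ℝ) - D)) ⬝ᵥ w₁
      = a ⬝ᵥ c - (x - 1) * (a ⬝ᵥ w₁) := by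
    rw [← Matrix.dotProduct_mulVec]
    have h := hEw
    rw [hEdef, Matrix.sub_mulVec, Matrix.smul_mulVec, Matrix.one_mulVec] at h
    have h1D : ((1 : Matrix (Fin M) (Fin M) ℝ) - D) *ᵥ w₁ = c - (x - 1) • w₁ := by
      rw [Matrix.sub_mulVec, Matrix.one_mulVec, ← h]
      funext i; simp; ring
    rw [h1D, dotProduct_sub, dotProduct_smul, smul_eq_mul]
  have hT : Matrix.det (Matrix.fromBlocks
        (Matrix.of fun (_ : Unit) (_ : Unit) => dotProduct a c - α)
        (Matrix.of fun _ j => Matrix.vecMul a ((1 : Matrix (Fin M) (Fin M) ℝ) - D) j - b j)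
        (Matrix.of fun (i : Fin M) (_ : Unit) => c i) E)
      = E.det * ((a ⬝ᵥ c - α) - ((a ⬝ᵥ c - (x - 1) * (a ⬝ᵥ w₁)) - b ⬝ᵥ w₁)) := by
    rw [Matrix.det_fromBlocks₂₂, Matrix.invOf_eq_nonsing_inv]
    congr 1
    have hB : (Matrix.of fun (_ : Unit) j => Matrix.vecMul a ((1 : Matrix (Fin M) (Fin M) ℝ) - D) j - b j)
        = Matrix.replicateRow Unit (a ᵥ* ((1 : Matrix (Fin M) (Fin M) ℝ) - D) - b) := rfl
    have hC : (Matrix.of fun (i : Fin M) (_ : Unit) => c i) = Matrix.replicateCol Unit c := rfl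
    rw [hB, hC, ← Matrix.replicateRow_vecMul, Matrix.det_unique, Matrix.sub_apply,
      Matrix.replicateRow_mul_replicateCol_apply]
    have : ((a ᵥ* ((1 : Matrix (Fin M) (Fin M) ℝ) - D) - b) ᵥ* E⁻¹) ⬝ᵥ c
        = (a ᵥ* ((1 : Matrix (Fin M) (Fin M) ℝ) - D)) ⬝ᵥ w₁ - b ⬝ᵥ w₁ := by
      rw [← Matrix.dotProduct_mulVec, ← hw₁, sub_dotProduct]
    rw [this, hkey]
    simp only [Matrix.of_apply]
  rw [hT]
  field_simp
  ring

open Matrix in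
theorem stmt_4 (M : ℕ) (α : ℝ) (a b c : Fin M → ℝ) (D : Matrix (Fin M) (Fin M) ℝ) :
    (∀ x lam : ℝ,
      Matrix.det (x • (1 : Matrix (Unit ⊕ Fin M) (Unit ⊕ Fin M) ℝ)
          - (Matrix.fromBlocks (Matrix.of fun _ _ => (1 : ℝ)) (Matrix.of fun _ j => b j)
              (0 : Matrix (Fin M) Unit ℝ) D
            + lam • Matrix.vecMulVec (Sum.elim (fun _ => -α) c) (Sum.elim (fun _ => (1 : ℝ)) a)))
        = (x - 1) * Matrix.det (x • (1 : Matrix (Fin M) (Fin M) ℝ) - D)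
          - lam * Matrix.det (Matrix.fromBlocks
              (Matrix.of fun (_ : Unit) (_ : Unit) => dotProduct a c - α)
              (Matrix.of fun _ j => Matrix.vecMul a ((1 : Matrix (Fin M) (Fin M) ℝ) - D) j - b j)
              (Matrix.of fun (i : Fin M) (_ : Unit) => c i)
              (x • (1 : Matrix (Fin M) (Fin M) ℝ) - D))) ∧
    (∃ p q : Fin (M + 1) → ℝ, (∑ m, p m = 1) ∧
      ∀ x lam : ℝ,
        Matrix.det (x • (1 : Matrix (Unit ⊕ Fin M) (Unit ⊕ Fin M) ℝ)
            - (Matrix.fromBlocks (Matrix.of fun _ _ => (1 : ℝ)) (Matrix.of fun _ j => b j)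
                (0 : Matrix (Fin M) Unit ℝ) D
              + lam • Matrix.vecMulVec (Sum.elim (fun _ => -α) c) (Sum.elim (fun _ => (1 : ℝ)) a)))
          = x ^ (M + 1) - (∑ m : Fin (M + 1), p m * x ^ (m : ℕ))
            - lam * ∑ m : Fin (M + 1), q m * x ^ (m : ℕ)) := by
  have key := fun (lam x : ℝ) => congrFun (keyLemma M α a b c D lam) x
  constructor
  · intro x lam; exact key lam x
  · set P : ℝ[X] := (X - 1) * D.charpoly with hPdef
    have hXm : (X - 1 : ℝ[X]).Monic := by simpa using monic_X_sub_C (1 : ℝ)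
    have hPm : P.Monic := hXm.mul (Matrix.charpoly_monic D)
    have hXdeg : (X - 1 : ℝ[X]).natDegree = 1 := by
      simpa using Polynomial.natDegree_X_sub_C (1 : ℝ)
    have hPdeg : P.natDegree = M + 1 := by
      rw [hPdef, hXm.natDegree_mul (Matrix.charpoly_monic D), hXdeg,
        Matrix.charpoly_natDegree_eq_dim, Fintype.card_fin]
      omega
    set S₁ : Matrix (Unit ⊕ Fin M) (Unit ⊕ Fin M) ℝ :=
      Matrix.fromBlocks (Matrix.of fun _ _ => (1 : ℝ)) (Matrix.of fun _ j => b j)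
        (0 : Matrix (Fin M) Unit ℝ) D
        + Matrix.vecMulVec (Sum.elim (fun _ => -α) c) (Sum.elim (fun _ => (1 : ℝ)) a) with hS₁
    have hSdeg : S₁.charpoly.natDegree = M + 1 := by
      rw [Matrix.charpoly_natDegree_eq_dim, Fintype.card_sum, Fintype.card_fin,
        Fintype.card_unit]
      omega
    set Q : ℝ[X] := P - S₁.charpoly with hQdef
    have hQdeg : Q.natDegree ≤ M := by
      by_cases hQ0 : Q = 0
      · simp [hQ0]
      · have hdlt : Q.degree < P.degree := by
          apply Polynomial.degree_sub_lt
          · rw [Polynomial.degree_eq_natDegree hPm.ne_zero,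
              Polynomial.degree_eq_natDegree (Matrix.charpoly_monic S₁).ne_zero, hPdeg, hSdeg]
          · exact hPm.ne_zero
          · rw [hPm.leadingCoeff, (Matrix.charpoly_monic S₁).leadingCoeff]
        have := Polynomial.natDegree_lt_natDegree hQ0 hdlt
        omega
    have hPeval : ∀ x : ℝ, Polynomial.eval x P
        = (x - 1) * Matrix.det (x • (1 : Matrix (Fin M) (Fin M) ℝ) - D) := by
      intro x
      rw [hPdef, Polynomial.eval_mul, Polynomial.eval_sub, Polynomial.eval_X,
        Polynomial.eval_one, evalCharpoly]
    have hQeval : ∀ x : ℝ, Polynomial.eval x Q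
        = Matrix.det (Matrix.fromBlocks
            (Matrix.of fun (_ : Unit) (_ : Unit) => dotProduct a c - α)
            (Matrix.of fun _ j => Matrix.vecMul a ((1 : Matrix (Fin M) (Fin M) ℝ) - D) j - b j)
            (Matrix.of fun (i : Fin M) (_ : Unit) => c i)
            (x • (1 : Matrix (Fin M) (Fin M) ℝ) - D)) := by
      intro x
      have h1 := key 1 x
      rw [one_smul, ← hS₁] at h1
      rw [hQdef, Polynomial.eval_sub, hPeval, evalCharpoly, h1]
      ring
    have hcoefftop : P.coeff (M + 1) = 1 := by
      have := hPm.coeff_natDegree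
      rwa [hPdeg] at this
    refine ⟨fun m => -(P.coeff m), fun m => Q.coeff m, ?_, ?_⟩
    · have h10 : P.eval 1 = 0 := by simp [hPdef]
      rw [Polynomial.eval_eq_sum_range, hPdeg, Finset.sum_range_succ, hcoefftop] at h10
      rw [Fin.sum_univ_eq_sum_range (fun i => -(P.coeff i)) (M + 1)]
      simp only [one_pow, mul_one] at h10
      rw [Finset.sum_neg_distrib]
      linarith
    · intro x lam
      rw [key lam x]
      have hPx : Polynomial.eval x P
          = x ^ (M + 1) - ∑ m : Fin (M + 1), -(P.coeff (m : ℕ)) * x ^ (m : ℕ) := by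
        rw [Polynomial.eval_eq_sum_range, hPdeg, Finset.sum_range_succ, hcoefftop,
          Fin.sum_univ_eq_sum_range (fun i => -(P.coeff i) * x ^ i) (M + 1)]
        simp only [neg_mul, Finset.sum_neg_distrib, one_mul]
        ring
      have hQx : Polynomial.eval x Q = ∑ m : Fin (M + 1), Q.coeff (m : ℕ) * x ^ (m : ℕ) := by
        rw [Polynomial.eval_eq_sum_range' (Nat.lt_succ_of_le hQdeg),
          Fin.sum_univ_eq_sum_range (fun i => Q.coeff i * x ^ i) (M + 1)]
      rw [← hPx, ← hQx, hPeval, hQeval]
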